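/- arXiv:2309.12948 — 2 statements merged into one kernel-verified Lean document; each statement's English description precedes it below -/
import Mathlib

section
/- Let N ≥ 2 be an integer and let s ∈ (1/2, 1). Then there exists a constant C > 0, depending only on N and s, such that for every measurable radial function u : ℝ^N → ℝ that is non-negative and radially non-decreasing on B_1, with ∫_{B_1} u² dx < ∞ and finite Gagliardo seminorm [u]_s on B_1, one has esssup_{B_1} |u| ≤ C ( (∫_{B_1} u² dx)^{1/2} + [u]_s ). (This is the content of Lemma 3.1(i): the L∞ norm of u on B_1 is controlled by the L² norm plus the fractional Sobolev seminorm, which in particular is dominated by the full mixed norm ‖u‖_X used in the paper.) -/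
open MeasureTheory Metric

/-- The squared `L²` integral of `u` on the unit ball, as an extended nonnegative real. -/
noncomputable def sqIntegral (N : ℕ) (u : EuclideanSpace ℝ (Fin N) → ℝ) : ENNReal :=
  ∫⁻ x in ball (0 : EuclideanSpace ℝ (Fin N)) 1, ENNReal.ofReal ((u x) ^ 2)

/-- The squared Gagliardo seminorm of `u` on the unit ball. -/
noncomputable def gagliardoSq (N : ℕ) (s : ℝ) (u : EuclideanSpace ℝ (Fin N) → ℝ) : ENNReal :=
  ∫⁻ x in ball (0 : EuclideanSpace ℝ (Fin N)) 1,
    ∫⁻ y in ball (0 : EuclideanSpace ℝ (Fin N)) 1,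
      ENNReal.ofReal ((u x - u y) ^ 2 / ‖x - y‖ ^ ((N : ℝ) + 2 * s))

lemma double_bound {E : Type*} [MeasurableSpace E] (μ : Measure E)
    (B A : Set E) (F : E → Set E) (W : E → E → ENNReal) (κ v : ENNReal)
    (hA : MeasurableSet A) (hF : ∀ x, MeasurableSet (F x))
    (hFB : ∀ x ∈ A, F x ⊆ B)
    (hW : ∀ x ∈ A, ∀ y ∈ F x, κ ≤ W x y)
    (hv : ∀ x ∈ A, v ≤ μ (F x)) :
    κ * v * μ (A ∩ B) ≤ ∫⁻ x in B, ∫⁻ y in B, W x y ∂μ ∂μ := by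
  have h1 : ∀ x ∈ A, κ * v ≤ ∫⁻ y in B, W x y ∂μ := by
    intro x hx
    have h2 : ∫⁻ y in B, (F x).indicator (fun _ => κ) y ∂μ ≤ ∫⁻ y in B, W x y ∂μ := by
      refine lintegral_mono fun y => ?_
      by_cases hy : y ∈ F x
      · simpa [Set.indicator_of_mem hy] using hW x hx y hy
      · simp [Set.indicator_of_notMem hy]
    refine le_trans ?_ h2
    rw [lintegral_indicator (hF x), setLIntegral_const, Measure.restrict_apply (hF x),
      Set.inter_eq_left.mpr (hFB x hx)]
    exact mul_le_mul_right (hv x hx) κ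
  have h3 : ∫⁻ x in B, A.indicator (fun _ => κ * v) x ∂μ ≤ ∫⁻ x in B, ∫⁻ y in B, W x y ∂μ ∂μ := by
    refine lintegral_mono fun x => ?_
    by_cases hx : x ∈ A
    · simpa [Set.indicator_of_mem hx] using h1 x hx
    · simp [Set.indicator_of_notMem hx]
  refine le_trans ?_ h3
  rw [lintegral_indicator hA, setLIntegral_const, Measure.restrict_apply hA]

lemma pow_sub_pow_ge {a b : ℝ} (hb : 0 ≤ b) (hab : b ≤ a) (n : ℕ) :
    (a - b) * b ^ n ≤ a ^ (n + 1) - b ^ (n + 1) := by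
  have h1 : a * b ^ n ≤ a * a ^ n := by
    have := pow_le_pow_left₀ hb hab n
    nlinarith [hb.trans hab]
  have h2 : b ^ (n+1) = b * b ^ n := by ring
  have h3 : a ^ (n+1) = a * a ^ n := by ring
  nlinarith

set_option maxHeartbeats 2000000 in
lemma key_step (N : ℕ) (hN : 2 ≤ N) (s : ℝ) (hs : 1 / 2 < s) (hs1 : s < 1)
    (u : EuclideanSpace ℝ (Fin N) → ℝ)
    (hmono : ∀ x y : EuclideanSpace ℝ (Fin N), ‖x‖ ≤ ‖y‖ → ‖y‖ < 1 → u x ≤ u y)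
    (e : EuclideanSpace ℝ (Fin N)) (he : ‖e‖ = 1)
    (k : ℕ) (hk : 1 ≤ k) :
    ENNReal.ofReal ((u ((1 - (2⁻¹:ℝ)^(k+2)) • e) - u ((1 - (2⁻¹:ℝ)^(k+1)) • e))^2
      * ((2⁻¹:ℝ)^k) ^ (1 - 2*s) * ((64:ℝ)⁻¹ ^ N
      * ((volume (ball (0 : EuclideanSpace ℝ (Fin N)) 1)).toReal)^2))
      ≤ gagliardoSq N s u := by
  classical
  haveI : Nontrivial (EuclideanSpace ℝ (Fin N)) :=
    nontrivial_of_ne e 0 (by intro h; rw [h, norm_zero] at he; norm_num at he)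
  set V : ENNReal := volume (ball (0 : EuclideanSpace ℝ (Fin N)) 1) with hV
  have hVpos : 0 < V := measure_ball_pos _ _ one_pos
  have hVne : V ≠ ⊤ := measure_ball_lt_top.ne
  set ω : ℝ := V.toReal with hω
  have hωpos : 0 < ω := ENNReal.toReal_pos hVpos.ne' hVne
  set γ : ℝ := (2⁻¹:ℝ)^k with hγdef
  have hγpos : 0 < γ := pow_pos (by norm_num) k
  have hγle : γ ≤ 2⁻¹ := by
    calc γ ≤ (2⁻¹:ℝ)^1 := pow_le_pow_of_le_one (by norm_num) (by norm_num) hk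
    _ = 2⁻¹ := pow_one _
  have hk1 : (2⁻¹:ℝ)^(k+1) = γ/2 := by rw [pow_succ, hγdef]; ring
  have hk2 : (2⁻¹:ℝ)^(k+2) = γ/4 := by rw [pow_add, hγdef]; ring
  rw [hk1, hk2]
  set g : ℝ := u ((1 - γ/4) • e) - u ((1 - γ/2) • e) with hg
  have hnorm_smul : ∀ t : ℝ, 0 ≤ t → ‖t • e‖ = t := by
    intro t ht
    rw [norm_smul, he, mul_one, Real.norm_eq_abs, abs_of_nonneg ht]
  have hg0 : 0 ≤ g := by
    have := hmono ((1 - γ/2) • e) ((1 - γ/4) • e)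
      (by rw [hnorm_smul _ (by linarith), hnorm_smul _ (by linarith)]; linarith)
      (by rw [hnorm_smul _ (by linarith)]; linarith)
    rw [hg]; linarith
  have hppos : 0 < (N:ℝ) + 2*s := by positivity
  set m : ℝ := 1 - 3*γ/16 with hm
  have hmpos : 0 < m := by rw [hm]; linarith
  set ρ : ℝ := γ/32 with hρ
  have hρpos : 0 < ρ := by rw [hρ]; linarith
  set A : Set (EuclideanSpace ℝ (Fin N)) :=
    closedBall (0 : EuclideanSpace ℝ (Fin N)) (1 - γ/2) \
      ball (0 : EuclideanSpace ℝ (Fin N)) (1 - γ) with hA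
  set cF : EuclideanSpace ℝ (Fin N) → EuclideanSpace ℝ (Fin N) :=
    fun x => (m / ‖x‖) • x with hcF
  have hmemA : ∀ x ∈ A, 1 - γ ≤ ‖x‖ ∧ ‖x‖ ≤ 1 - γ/2 := by
    intro x hx
    obtain ⟨hx1, hx2⟩ := hx
    rw [mem_closedBall_zero_iff] at hx1
    rw [mem_ball_zero_iff] at hx2
    exact ⟨not_lt.mp hx2, hx1⟩
  have hgeo : ∀ x ∈ A, ∀ y ∈ ball (cF x) ρ,
      (1 - γ/4 ≤ ‖y‖ ∧ ‖y‖ < 1) ∧ (0 < ‖x - y‖ ∧ ‖x - y‖ ≤ γ) := by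
    intro x hx y hy
    obtain ⟨hx1, hx2⟩ := hmemA x hx
    have hxpos : 0 < ‖x‖ := by linarith
    have hcxnorm : ‖cF x‖ = m := by
      rw [hcF]
      simp only
      rw [norm_smul, Real.norm_eq_abs, abs_of_nonneg (le_of_lt (div_pos hmpos hxpos))]
      field_simp
    have hyc : ‖y - cF x‖ < ρ := by rwa [mem_ball, dist_eq_norm] at hy
    have habs : |‖y‖ - m| < ρ := by
      have h := abs_norm_sub_norm_le y (cF x)
      rw [hcxnorm] at h
      exact lt_of_le_of_lt h hyc
    obtain ⟨habs1, habs2⟩ := abs_lt.mp habs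
    have hylb : 1 - γ/4 ≤ ‖y‖ := by rw [hm] at habs1; rw [hρ] at habs1; linarith
    have hyub : ‖y‖ < 1 := by rw [hm] at habs2; rw [hρ] at habs2; linarith
    have hxc : ‖x - cF x‖ = m - ‖x‖ := by
      have hdec : x - cF x = (1 - m/‖x‖) • x := by
        rw [hcF]; simp only; rw [sub_smul, one_smul]
      have hmx : ‖x‖ ≤ m := by rw [hm]; linarith
      rw [hdec, norm_smul, Real.norm_eq_abs,
        abs_of_nonpos (by rw [sub_nonpos]; exact (one_le_div hxpos).mpr hmx)]
      field_simp; ring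
    have hxyub : ‖x - y‖ ≤ γ := by
      have htri : ‖x - y‖ ≤ ‖x - cF x‖ + ‖cF x - y‖ := by
        have := dist_triangle x (cF x) y
        simpa [dist_eq_norm] using this
      have h2 : ‖cF x - y‖ = ‖y - cF x‖ := norm_sub_rev _ _
      rw [hxc, h2] at htri
      rw [hm] at htri; rw [hρ] at hyc
      linarith
    have hxypos : 0 < ‖x - y‖ := by
      have h1 : ‖y‖ - ‖x‖ ≤ ‖y - x‖ := norm_sub_norm_le y x
      have h2 : ‖y - x‖ = ‖x - y‖ := norm_sub_rev _ _
      rw [h2] at h1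
      have : ‖x‖ < ‖y‖ := by linarith
      linarith
    exact ⟨⟨hylb, hyub⟩, hxypos, hxyub⟩
  have hmain := double_bound volume (ball (0 : EuclideanSpace ℝ (Fin N)) 1) A
      (fun x => ball (cF x) ρ)
      (fun x y => ENNReal.ofReal ((u x - u y)^2 / ‖x - y‖ ^ ((N : ℝ) + 2 * s)))
      (ENNReal.ofReal (g^2 / γ ^ ((N:ℝ) + 2*s))) (ENNReal.ofReal (ρ^N) * V)
      (measurableSet_closedBall.diff measurableSet_ball)
      (fun x => measurableSet_ball)
      (fun x hx y hy => by
        rw [mem_ball_zero_iff]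
        exact ((hgeo x hx y hy).1).2)
      (fun x hx y hy => by
        obtain ⟨⟨hylb, hyub⟩, hxypos, hxyub⟩ := hgeo x hx y hy
        obtain ⟨hx1, hx2⟩ := hmemA x hx
        have huy : u ((1 - γ/4) • e) ≤ u y := by
          refine hmono _ _ ?_ hyub
          rw [hnorm_smul _ (by linarith)]; exact hylb
        have hux : u x ≤ u ((1 - γ/2) • e) := by
          refine hmono _ _ ?_ ?_
          · rw [hnorm_smul _ (by linarith)]; exact hx2
          · rw [hnorm_smul _ (by linarith)]; linarith
        apply ENNReal.ofReal_le_ofReal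
        have hsq : g^2 ≤ (u x - u y)^2 := by
          have h1 : g ≤ u y - u x := by rw [hg]; linarith
          have h2 : (u x - u y)^2 = (u y - u x)^2 := by ring
          rw [h2]
          exact pow_le_pow_left₀ hg0 h1 2
        have hrp : ‖x - y‖ ^ ((N:ℝ) + 2*s) ≤ γ ^ ((N:ℝ) + 2*s) :=
          Real.rpow_le_rpow (norm_nonneg _) hxyub hppos.le
        exact div_le_div₀ (sq_nonneg _) hsq
          (Real.rpow_pos_of_pos hxypos _) hrp)
      (fun x hx => by
        rw [Measure.addHaar_ball volume (cF x) hρpos.le, finrank_euclideanSpace_fin])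
  have hAsub : A ⊆ ball (0 : EuclideanSpace ℝ (Fin N)) 1 := by
    intro x hx
    rw [mem_ball_zero_iff]
    linarith [(hmemA x hx).2]
  rw [Set.inter_eq_left.mpr hAsub] at hmain
  have hpowle : ((1-γ):ℝ)^N ≤ (1-γ/2)^N := pow_le_pow_left₀ (by linarith) (by linarith) N
  have hdnn : (0:ℝ) ≤ (1-γ/2)^N - (1-γ)^N := by linarith
  have hsplit : ENNReal.ofReal ((1-γ/2)^N) * V
      = ENNReal.ofReal ((1-γ/2)^N - (1-γ)^N) * V + ENNReal.ofReal ((1-γ)^N) * V := by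
    rw [← add_mul, ← ENNReal.ofReal_add hdnn (pow_nonneg (by linarith) N)]
    congr 2
    ring
  have hvolA : volume A = ENNReal.ofReal ((1-γ/2)^N - (1-γ)^N) * V := by
    rw [hA, measure_diff
        ((ball_subset_closedBall).trans (closedBall_subset_closedBall (by linarith)))
        measurableSet_ball.nullMeasurableSet measure_ball_lt_top.ne,
      Measure.addHaar_closedBall volume _ (by linarith : (0:ℝ) ≤ 1-γ/2),
      Measure.addHaar_ball volume _ (by linarith : (0:ℝ) ≤ 1-γ), finrank_euclideanSpace_fin,
      hsplit, ENNReal.add_sub_cancel_right (ENNReal.mul_ne_top ENNReal.ofReal_ne_top hVne)]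
  rw [hvolA] at hmain
  have hGagEq : gagliardoSq N s u =
      ∫⁻ x in ball (0 : EuclideanSpace ℝ (Fin N)) 1,
        ∫⁻ y in ball (0 : EuclideanSpace ℝ (Fin N)) 1,
          ENNReal.ofReal ((u x - u y) ^ 2 / ‖x - y‖ ^ ((N : ℝ) + 2 * s)) := rfl
  rw [hGagEq]
  refine le_trans ?_ hmain
  have hane : 0 ≤ g^2 / γ ^ ((N:ℝ)+2*s) :=
    div_nonneg (sq_nonneg _) (Real.rpow_pos_of_pos hγpos _).le
  have hVω : ENNReal.ofReal ω = V := ENNReal.ofReal_toReal hVne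
  have hcollapse : ENNReal.ofReal (g^2 / γ ^ ((N:ℝ)+2*s) * (ρ^N * ω)
        * (((1-γ/2)^N - (1-γ)^N) * ω))
      = ENNReal.ofReal (g^2 / γ ^ ((N:ℝ)+2*s)) * (ENNReal.ofReal (ρ^N) * V)
        * (ENNReal.ofReal ((1-γ/2)^N - (1-γ)^N) * V) := by
    rw [ENNReal.ofReal_mul (mul_nonneg hane (by positivity : (0:ℝ) ≤ ρ^N * ω)),
      ENNReal.ofReal_mul hane,
      ENNReal.ofReal_mul (by positivity : (0:ℝ) ≤ ρ^N),
      ENNReal.ofReal_mul hdnn, hVω]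
  rw [← hcollapse]
  apply ENNReal.ofReal_le_ofReal
  -- real inequality
  obtain ⟨N', rfl⟩ : ∃ m, N = m + 2 := ⟨N - 2, by omega⟩
  have hΔ : (γ/2) * (2⁻¹:ℝ)^(N'+1) ≤ (1-γ/2)^(N'+2) - (1-γ)^(N'+2) := by
    have h1 := pow_sub_pow_ge (by linarith : (0:ℝ) ≤ 1-γ) (by linarith : (1-γ:ℝ) ≤ 1-γ/2) (N'+1)
    have h2 : ((2⁻¹:ℝ))^(N'+1) ≤ (1-γ)^(N'+1) := pow_le_pow_left₀ (by norm_num) (by linarith) _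
    nlinarith [pow_nonneg (by linarith : (0:ℝ) ≤ 1-γ) (N'+1)]
  have hXpos : (0:ℝ) < γ ^ (2*s) := Real.rpow_pos_of_pos hγpos _
  have hX0 : γ ^ (2*s) ≠ 0 := hXpos.ne'
  have hppow : γ ^ ((N'+2:ℕ):ℝ) * γ ^ (2*s) = γ ^ (((N'+2:ℕ):ℝ) + 2*s) := by
    rw [← Real.rpow_add hγpos]
  have hppow2 : γ ^ (((N'+2:ℕ):ℝ) + 2*s) = γ^(N'+2) * γ^(2*s) := by
    rw [← hppow, Real.rpow_natCast]
  have hqpow : γ ^ (1-2*s) = γ / γ^(2*s) := by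
    rw [show (1-2*s) = 1 + -(2*s) by ring, Real.rpow_add hγpos, Real.rpow_one,
      Real.rpow_neg hγpos.le, div_eq_mul_inv]
  have h64 : ((64:ℝ))⁻¹^(N'+2) = (32⁻¹:ℝ)^(N'+2) * (2⁻¹:ℝ)^(N'+2) := by
    rw [← mul_pow]; norm_num
  have hγN : (γ:ℝ)^(N'+2) ≠ 0 := by positivity
  have hident : g^2 * γ^(1-2*s) * ((64:ℝ)⁻¹^(N'+2) * ω^2)
      = g^2 / γ^(((N'+2:ℕ):ℝ) + 2*s) * (ρ^(N'+2) * ω) * (((γ/2) * (2⁻¹:ℝ)^(N'+1)) * ω) := by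
    rw [hqpow, hppow2, h64, hρ]
    field_simp
    ring
  rw [hident]
  have hfactor : (0:ℝ) ≤ g^2 / γ^(((N'+2:ℕ):ℝ) + 2*s) * (ρ^(N'+2) * ω) := by
    have h5 : (0:ℝ) < γ ^ (((N'+2:ℕ):ℝ) + 2*s) := Real.rpow_pos_of_pos hγpos _
    have h6 : (0:ℝ) ≤ ρ^(N'+2) * ω := by positivity
    exact mul_nonneg (div_nonneg (sq_nonneg _) h5.le) h6
  exact mul_le_mul_of_nonneg_left (mul_le_mul_of_nonneg_right hΔ hωpos.le) hfactor
set_option maxHeartbeats 2000000 in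
/-- Lemma 3.1(i): for non-negative radially non-decreasing radial functions,
the `L^∞` norm on the unit ball is controlled by the `L²` norm plus the Gagliardo seminorm. -/
theorem radial_nondecreasing_essSup_bound
    (N : ℕ) (hN : 2 ≤ N) (s : ℝ) (hs : 1 / 2 < s) (hs1 : s < 1) :
    ∃ C : ℝ, 0 < C ∧
      ∀ u : EuclideanSpace ℝ (Fin N) → ℝ, Measurable u →
        (∀ x y : EuclideanSpace ℝ (Fin N), ‖x‖ = ‖y‖ → u x = u y) →
        (∀ x ∈ ball (0 : EuclideanSpace ℝ (Fin N)) 1, 0 ≤ u x) →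
        (∀ x y : EuclideanSpace ℝ (Fin N), ‖x‖ ≤ ‖y‖ → ‖y‖ < 1 → u x ≤ u y) →
        sqIntegral N u < ⊤ →
        gagliardoSq N s u < ⊤ →
        essSup (fun x => ENNReal.ofReal |u x|)
            (volume.restrict (ball (0 : EuclideanSpace ℝ (Fin N)) 1)) ≤
          ENNReal.ofReal C *
            ((sqIntegral N u) ^ (1 / 2 : ℝ) + (gagliardoSq N s u) ^ (1 / 2 : ℝ)) := by
  classical
  have hN0 : 0 < N := by omega
  set e : EuclideanSpace ℝ (Fin N) := EuclideanSpace.single (⟨0, hN0⟩ : Fin N) (1:ℝ) with he_def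
  have he : ‖e‖ = 1 := by rw [he_def, EuclideanSpace.norm_single]; norm_num
  set V : ENNReal := volume (ball (0 : EuclideanSpace ℝ (Fin N)) 1) with hV
  haveI : Nontrivial (EuclideanSpace ℝ (Fin N)) :=
    nontrivial_of_ne e 0 (by intro h; rw [h, norm_zero] at he; norm_num at he)
  have hVpos : 0 < V := measure_ball_pos _ _ one_pos
  have hVne : V ≠ ⊤ := measure_ball_lt_top.ne
  set ω : ℝ := V.toReal with hω
  have hωpos : 0 < ω := ENNReal.toReal_pos hVpos.ne' hVne
  set θ : ℝ := (2⁻¹:ℝ) ^ (s - 1/2) with hθ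
  have hθpos : 0 < θ := Real.rpow_pos_of_pos (by norm_num) _
  have hθlt1 : θ < 1 := Real.rpow_lt_one (by norm_num) (by norm_num) (by linarith)
  set c₀ : ℝ := (64:ℝ)⁻¹^N * ω^2 with hc₀
  have hc₀pos : 0 < c₀ := by positivity
  set c₂ : ℝ := (7/16:ℝ) * ω with hc₂
  have hc₂pos : 0 < c₂ := by positivity
  have hθgap : (0:ℝ) < 1 - θ := by linarith
  refine ⟨(Real.sqrt c₂)⁻¹ + (Real.sqrt c₀)⁻¹ * (1-θ)⁻¹ + 1, by positivity, ?_⟩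
  intro u hu hrad hnonneg hmono hL2 hGag
  set Γ : ℝ := (gagliardoSq N s u).toReal with hΓ
  set Λ : ℝ := (sqIntegral N u).toReal with hΛ
  have hΓ0 : 0 ≤ Γ := ENNReal.toReal_nonneg
  have hΛ0 : 0 ≤ Λ := ENNReal.toReal_nonneg
  set M : ℝ := Real.sqrt Γ * (Real.sqrt c₀)⁻¹ with hM
  set M₂ : ℝ := Real.sqrt Λ * (Real.sqrt c₂)⁻¹ with hM₂
  have hM0 : 0 ≤ M := by positivity
  have hM₂0 : 0 ≤ M₂ := by positivity
  have hnorm_smul : ∀ t : ℝ, 0 ≤ t → ‖t • e‖ = t := by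
    intro t ht
    rw [norm_smul, he, mul_one, Real.norm_eq_abs, abs_of_nonneg ht]
  set a : ℕ → ℝ := fun i => u ((1 - (2⁻¹:ℝ)^i) • e) with ha
  -- per-scale gap bound
  have hgap : ∀ k : ℕ, 1 ≤ k → a (k+2) - a (k+1) ≤ M * θ^k := by
    intro k hk
    have hks := key_step N hN s hs hs1 u hmono e he k hk
    have hγpos : (0:ℝ) < (2⁻¹:ℝ)^k := pow_pos (by norm_num) k
    have h2 : (a (k+2) - a (k+1))^2 * ((2⁻¹:ℝ)^k)^(1-2*s) * c₀ ≤ Γ := by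
      rw [hΓ]
      refine (ENNReal.ofReal_le_iff_le_toReal hGag.ne).mp ?_
      rw [ha, hc₀]
      simp only
      exact hks
    have hθk : (θ^k)^2 * ((2⁻¹:ℝ)^k)^(1-2*s) = 1 := by
      rw [hθ, ← Real.rpow_natCast ((2⁻¹:ℝ) ^ (s - 1/2)) k,
        ← Real.rpow_natCast (2⁻¹:ℝ) k,
        ← Real.rpow_mul (by norm_num : (0:ℝ) ≤ 2⁻¹),
        ← Real.rpow_mul (by norm_num : (0:ℝ) ≤ 2⁻¹),
        ← Real.rpow_natCast ((2⁻¹:ℝ) ^ ((s - 1/2) * (k:ℝ))) 2,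
        ← Real.rpow_mul (by norm_num : (0:ℝ) ≤ 2⁻¹),
        ← Real.rpow_add (by norm_num : (0:ℝ) < 2⁻¹)]
      rw [show (s - 1/2) * (k:ℝ) * (2:ℕ) + (k:ℝ) * (1-2*s) = 0 by push_cast; ring]
      exact Real.rpow_zero _
    have h3 : (a (k+2) - a (k+1))^2 * ((2⁻¹:ℝ)^k)^(1-2*s) ≤ Γ / c₀ :=
      (le_div_iff₀ hc₀pos).mpr h2
    have h4 : (a (k+2) - a (k+1))^2 * ((2⁻¹:ℝ)^k)^(1-2*s) * (θ^k)^2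
        ≤ (Γ / c₀) * (θ^k)^2 :=
      mul_le_mul_of_nonneg_right h3 (sq_nonneg _)
    have h5 : (a (k+2) - a (k+1))^2 * ((2⁻¹:ℝ)^k)^(1-2*s) * (θ^k)^2
        = (a (k+2) - a (k+1))^2 := by
      rw [mul_assoc, mul_comm (((2⁻¹:ℝ)^k)^(1-2*s)) ((θ^k)^2), hθk, mul_one]
    have h6 : (a (k+2) - a (k+1))^2 ≤ (M * θ^k)^2 := by
      have hMsq : (M * θ^k)^2 = (Γ / c₀) * (θ^k)^2 := by
        rw [hM, mul_pow, mul_pow, Real.sq_sqrt hΓ0, ← Real.sqrt_inv, Real.sq_sqrt (by positivity)]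
        rw [div_eq_mul_inv]
      rw [hMsq]
      linarith [h4, h5]
    exact le_of_pow_le_pow_left₀ (by norm_num) (by positivity) h6
  -- telescoping partial sums
  have hpartial : ∀ n : ℕ, a (n+2) ≤ a 2 + M * ∑ i ∈ Finset.range n, θ^(i+1) := by
    intro n
    induction n with
    | zero => simp
    | succ n ih =>
      have hg := hgap (n+1) (by omega)
      rw [Finset.sum_range_succ, mul_add]
      have hidx : n + 1 + 2 = n + 3 := by omega
      rw [hidx] at hg
      have hidx2 : n + 1 + 1 = n + 2 := by omega
      rw [hidx2] at hg
      have : n + 1 + 2 = n + 3 := by omega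
      rw [this]
      linarith
  have hgeom : ∀ n : ℕ, (∑ i ∈ Finset.range n, θ^(i+1)) ≤ (1-θ)⁻¹ := by
    intro n
    have h1 : (∑ i ∈ Finset.range n, θ^(i+1)) = θ * ∑ i ∈ Finset.range n, θ^i := by
      rw [Finset.mul_sum]
      exact Finset.sum_congr rfl fun i _ => by ring
    have h2 : (∑ i ∈ Finset.range n, θ^i) ≤ (1-θ)⁻¹ := by
      rw [geom_sum_eq hθlt1.ne n]
      rw [show (θ^n - 1)/(θ - 1) = (1 - θ^n)/(1-θ) by rw [div_eq_div_iff] <;> [ring; linarith; linarith]]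
      rw [inv_eq_one_div]
      apply div_le_div₀ (by norm_num) (by nlinarith [pow_nonneg hθpos.le n]) (by linarith) le_rfl
    calc (∑ i ∈ Finset.range n, θ^(i+1)) = θ * ∑ i ∈ Finset.range n, θ^i := h1
      _ ≤ θ * (1-θ)⁻¹ := mul_le_mul_of_nonneg_left h2 hθpos.le
      _ ≤ 1 * (1-θ)⁻¹ := mul_le_mul_of_nonneg_right hθlt1.le (by positivity)
      _ = (1-θ)⁻¹ := one_mul _
  -- bound on a 2 from the L² norm
  have ha2mem : ((1:ℝ) - (2⁻¹:ℝ)^2) • e ∈ ball (0 : EuclideanSpace ℝ (Fin N)) 1 := by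
    rw [mem_ball_zero_iff, hnorm_smul _ (by norm_num)]; norm_num
  have ha2nn : 0 ≤ a 2 := hnonneg _ ha2mem
  have ha2 : a 2 ≤ M₂ := by
    set Ann : Set (EuclideanSpace ℝ (Fin N)) :=
      ball (0 : EuclideanSpace ℝ (Fin N)) 1 \ closedBall (0 : EuclideanSpace ℝ (Fin N)) (3/4)
      with hAnn
    have hAnnMeas : MeasurableSet Ann := measurableSet_ball.diff measurableSet_closedBall
    have hlow : ∫⁻ x in ball (0 : EuclideanSpace ℝ (Fin N)) 1,
        Ann.indicator (fun _ => ENNReal.ofReal ((a 2)^2)) x ≤ sqIntegral N u := by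
      refine lintegral_mono fun x => ?_
      by_cases hx : x ∈ Ann
      · rw [Set.indicator_of_mem hx]
        obtain ⟨hx1, hx2⟩ := hx
        rw [mem_ball_zero_iff] at hx1
        rw [mem_closedBall_zero_iff] at hx2
        push_neg at hx2
        apply ENNReal.ofReal_le_ofReal
        have hux : a 2 ≤ u x := by
          rw [ha]
          refine hmono _ _ ?_ hx1
          rw [hnorm_smul _ (by norm_num)]
          norm_num
          linarith
        exact pow_le_pow_left₀ ha2nn hux 2
      · rw [Set.indicator_of_notMem hx]; exact zero_le
    rw [lintegral_indicator hAnnMeas, setLIntegral_const,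
      Measure.restrict_apply hAnnMeas,
      Set.inter_eq_left.mpr (Set.diff_subset)] at hlow
    have hAnnVol : ENNReal.ofReal ((7/16:ℝ)) * V ≤ volume Ann := by
      have h34 : ((3:ℝ)/4)^N ≤ 9/16 := by
        calc ((3:ℝ)/4)^N ≤ ((3:ℝ)/4)^2 := pow_le_pow_of_le_one (by norm_num) (by norm_num) hN
          _ = 9/16 := by norm_num
      have hvol : volume Ann = ENNReal.ofReal (1 - (3/4:ℝ)^N) * V := by
        rw [hAnn, measure_diff (closedBall_subset_ball (by norm_num))
            measurableSet_closedBall.nullMeasurableSet measure_closedBall_lt_top.ne,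
          Measure.addHaar_closedBall volume _ (by norm_num : (0:ℝ) ≤ 3/4),
          finrank_euclideanSpace_fin]
        have hsplit : V = ENNReal.ofReal (1 - (3/4:ℝ)^N) * V + ENNReal.ofReal ((3/4:ℝ)^N) * V := by
          rw [← add_mul, ← ENNReal.ofReal_add (by linarith) (by positivity)]
          norm_num
        exact ENNReal.sub_eq_of_eq_add (ENNReal.mul_ne_top ENNReal.ofReal_ne_top hVne) hsplit
      rw [hvol]
      exact mul_le_mul_left (ENNReal.ofReal_le_ofReal (by linarith)) V
    have hchain : ENNReal.ofReal ((a 2)^2 * (7/16) * ω) ≤ sqIntegral N u := by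
      calc ENNReal.ofReal ((a 2)^2 * (7/16) * ω)
          = ENNReal.ofReal ((a 2)^2) * (ENNReal.ofReal (7/16) * V) := by
            rw [ENNReal.ofReal_mul (by positivity), ENNReal.ofReal_mul (by positivity),
              hω, ENNReal.ofReal_toReal hVne, mul_assoc]
        _ ≤ ENNReal.ofReal ((a 2)^2) * volume Ann := mul_le_mul_right hAnnVol _
        _ ≤ sqIntegral N u := hlow
    have hreal : (a 2)^2 * (7/16) * ω ≤ Λ := by
      rw [hΛ]
      exact (ENNReal.ofReal_le_iff_le_toReal hL2.ne).mp hchain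
    have h6 : (a 2)^2 ≤ M₂^2 := by
      have hM₂sq : M₂^2 = Λ / c₂ := by
        rw [hM₂, mul_pow, Real.sq_sqrt hΛ0, ← Real.sqrt_inv, Real.sq_sqrt (by positivity),
          div_eq_mul_inv]
      rw [hM₂sq, le_div_iff₀ hc₂pos, hc₂]
      linarith [hreal]
    exact le_of_pow_le_pow_left₀ (by norm_num) hM₂0 h6
  -- pointwise bound on u over the ball
  have hbound : ∀ x ∈ ball (0 : EuclideanSpace ℝ (Fin N)) 1,
      u x ≤ M₂ + M * (1-θ)⁻¹ := by
    intro x hx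
    rw [mem_ball_zero_iff] at hx
    obtain ⟨n, hn⟩ := exists_pow_lt_of_lt_one
      (by linarith [norm_nonneg x] : (0:ℝ) < 1 - ‖x‖) (by norm_num : (2⁻¹:ℝ) < 1)
    have h1 : ‖x‖ ≤ 1 - (2⁻¹:ℝ)^(n+2) := by
      have : (2⁻¹:ℝ)^(n+2) ≤ (2⁻¹:ℝ)^n :=
        pow_le_pow_of_le_one (by norm_num) (by norm_num) (by omega)
      linarith
    have hpw : (0:ℝ) ≤ 1 - (2⁻¹:ℝ)^(n+2) := by
      have : (2⁻¹:ℝ)^(n+2) ≤ 1 := by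
        rw [show (1:ℝ) = (2⁻¹:ℝ)^0 by norm_num]
        exact pow_le_pow_of_le_one (by norm_num) (by norm_num) (by omega)
      linarith
    have h2 : u x ≤ a (n+2) := by
      rw [ha]
      refine hmono _ _ ?_ ?_
      · rw [hnorm_smul _ hpw]; exact h1
      · rw [hnorm_smul _ hpw]
        have : (0:ℝ) < (2⁻¹:ℝ)^(n+2) := pow_pos (by norm_num) _
        linarith
    have h3 : a (n+2) ≤ a 2 + M * (1-θ)⁻¹ := by
      refine le_trans (hpartial n) ?_
      have := mul_le_mul_of_nonneg_left (hgeom n) hM0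
      linarith
    linarith
  -- essSup bound
  have hess : essSup (fun x => ENNReal.ofReal |u x|)
      (volume.restrict (ball (0 : EuclideanSpace ℝ (Fin N)) 1))
      ≤ ENNReal.ofReal (M₂ + M * (1-θ)⁻¹) := by
    refine essSup_le_of_ae_le _ ?_
    refine (ae_restrict_iff' measurableSet_ball).mpr (ae_of_all _ fun x hx => ?_)
    show ENNReal.ofReal |u x| ≤ ENNReal.ofReal (M₂ + M * (1-θ)⁻¹)
    rw [abs_of_nonneg (hnonneg x hx)]
    exact ENNReal.ofReal_le_ofReal (hbound x hx)
  refine le_trans hess ?_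
  have hΛhalf : (sqIntegral N u) ^ (1/2 : ℝ) = ENNReal.ofReal (Real.sqrt Λ) := by
    rw [hΛ]
    conv_lhs => rw [← ENNReal.ofReal_toReal hL2.ne]
    rw [ENNReal.ofReal_rpow_of_nonneg ENNReal.toReal_nonneg (by norm_num), Real.sqrt_eq_rpow]
  have hΓhalf : (gagliardoSq N s u) ^ (1/2 : ℝ) = ENNReal.ofReal (Real.sqrt Γ) := by
    rw [hΓ]
    conv_lhs => rw [← ENNReal.ofReal_toReal hGag.ne]
    rw [ENNReal.ofReal_rpow_of_nonneg ENNReal.toReal_nonneg (by norm_num), Real.sqrt_eq_rpow]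
  rw [hΛhalf, hΓhalf, ← ENNReal.ofReal_add (Real.sqrt_nonneg _) (Real.sqrt_nonneg _),
    ← ENNReal.ofReal_mul (by positivity)]
  apply ENNReal.ofReal_le_ofReal
  have hsΛ : 0 ≤ Real.sqrt Λ := Real.sqrt_nonneg _
  have hsΓ : 0 ≤ Real.sqrt Γ := Real.sqrt_nonneg _
  have e1 : M₂ = (Real.sqrt c₂)⁻¹ * Real.sqrt Λ := by rw [hM₂]; ring
  have e2 : M * (1-θ)⁻¹ = (Real.sqrt c₀)⁻¹ * (1-θ)⁻¹ * Real.sqrt Γ := by rw [hM]; ring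
  rw [e1, e2]
  have hc2i : 0 ≤ (Real.sqrt c₂)⁻¹ := by positivity
  have hc0i : 0 ≤ (Real.sqrt c₀)⁻¹ * (1-θ)⁻¹ := by positivity
  nlinarith [mul_nonneg hc2i hsΓ, mul_nonneg hc0i hsΛ, mul_nonneg (add_nonneg hc2i hc0i) (add_nonneg hsΛ hsΓ)]
end

section
/- Let N ≥ 1 be an integer and s ∈ (0,1). Let u : ℝ^N → ℝ and φ : ℝ^N → ℝ be measurable functions such that φ(x) = 0 for all x in the closed unit ball, the function (x,y) ↦ (u(x) − u(y))(φ(x) − φ(y)) / |x − y|^{N+2s} is integrable on Q = ℝ^{2N} \ (B_1^c × B_1^c), and the function (x,y) ↦ (u(x) − u(y)) φ(x) / |x − y|^{N+2s} is integrable on (ℝ^N \ closure(B_1)) × B_1. Then ∬_Q (u(x) − u(y))(φ(x) − φ(y)) / |x − y|^{N+2s} dx dy = 2 ∫_{ℝ^N \ closure(B_1)} 𝒩_s u(x) φ(x) dx, where 𝒩_s u(x) = ∫_{B_1} (u(x) − u(y)) / |x − y|^{N+2s} dy. -/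
open MeasureTheory Metric

/-- nonlocal integration-by-parts identity relating the Gagliardo-type bilinear
form over `Q = ℝ^{2N} \ (B₁ᶜ × B₁ᶜ)` to the nonlocal Neumann operator `𝒩ₛ u`, for test
functions `φ` vanishing on the closed unit ball. -/
theorem nonlocal_neumann_integration_by_parts
    (N : ℕ) (hN : 1 ≤ N) (s : ℝ) (hs : 0 < s) (hs1 : s < 1)
    (u φ : EuclideanSpace ℝ (Fin N) → ℝ)
    (hφ : ∀ x ∈ closedBall (0 : EuclideanSpace ℝ (Fin N)) 1, φ x = 0)
    (h₁ : IntegrableOn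
      (fun z : EuclideanSpace ℝ (Fin N) × EuclideanSpace ℝ (Fin N) =>
        (u z.1 - u z.2) * (φ z.1 - φ z.2) / ‖z.1 - z.2‖ ^ ((N : ℝ) + 2 * s))
      (((ball (0 : EuclideanSpace ℝ (Fin N)) 1)ᶜ ×ˢ (ball (0 : EuclideanSpace ℝ (Fin N)) 1)ᶜ)ᶜ))
    (h₂ : IntegrableOn
      (fun z : EuclideanSpace ℝ (Fin N) × EuclideanSpace ℝ (Fin N) =>
        (u z.1 - u z.2) * φ z.1 / ‖z.1 - z.2‖ ^ ((N : ℝ) + 2 * s))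
      ((closedBall (0 : EuclideanSpace ℝ (Fin N)) 1)ᶜ ×ˢ ball (0 : EuclideanSpace ℝ (Fin N)) 1)) :
    (∫ z in (((ball (0 : EuclideanSpace ℝ (Fin N)) 1)ᶜ ×ˢ
        (ball (0 : EuclideanSpace ℝ (Fin N)) 1)ᶜ)ᶜ),
      (u z.1 - u z.2) * (φ z.1 - φ z.2) / ‖z.1 - z.2‖ ^ ((N : ℝ) + 2 * s)) =
    2 * ∫ x in (closedBall (0 : EuclideanSpace ℝ (Fin N)) 1)ᶜ,
      (∫ y in ball (0 : EuclideanSpace ℝ (Fin N)) 1,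
        (u x - u y) / ‖x - y‖ ^ ((N : ℝ) + 2 * s)) * φ x := by
  haveI : Nontrivial (EuclideanSpace ℝ (Fin N)) := by
    apply Module.nontrivial_of_finrank_pos (R := ℝ)
    rw [finrank_euclideanSpace, Fintype.card_fin]
    omega
  let E := EuclideanSpace ℝ (Fin N)
  set A : Set E := ball 0 1 with hA
  set C : Set E := closedBall 0 1 with hC
  set f : E × E → ℝ :=
    fun z => (u z.1 - u z.2) * (φ z.1 - φ z.2) / ‖z.1 - z.2‖ ^ ((N : ℝ) + 2 * s) with hfdef
  set g : E × E → ℝ :=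
    fun z => (u z.1 - u z.2) * φ z.1 / ‖z.1 - z.2‖ ^ ((N : ℝ) + 2 * s) with hgdef
  have hAm : MeasurableSet A := measurableSet_ball
  have hCm : MeasurableSet C := measurableSet_closedBall
  have hAC : A ⊆ C := ball_subset_closedBall
  -- decomposition of Q
  have hQ : (Aᶜ ×ˢ Aᶜ)ᶜ = (A ×ˢ A) ∪ ((A ×ˢ Aᶜ) ∪ (Aᶜ ×ˢ A)) := by
    ext ⟨x, y⟩
    by_cases hx : x ∈ A <;> by_cases hy : y ∈ A <;> simp [Set.mem_prod, hx, hy]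
  have hsub1 : A ×ˢ A ⊆ (Aᶜ ×ˢ Aᶜ)ᶜ := by rw [hQ]; exact Set.subset_union_left
  have hsub2 : A ×ˢ Aᶜ ⊆ (Aᶜ ×ˢ Aᶜ)ᶜ := by
    rw [hQ]; exact Set.subset_union_of_subset_right Set.subset_union_left _
  have hsub3 : Aᶜ ×ˢ A ⊆ (Aᶜ ×ˢ Aᶜ)ᶜ := by
    rw [hQ]; exact Set.subset_union_of_subset_right Set.subset_union_right _
  have hd1 : Disjoint (A ×ˢ A) ((A ×ˢ Aᶜ) ∪ (Aᶜ ×ˢ A)) := by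
    rw [Set.disjoint_left]
    rintro ⟨x, y⟩ ⟨hx, hy⟩ (⟨_, h⟩ | ⟨h, _⟩) <;> exact h ‹_›
  have hd2 : Disjoint (A ×ˢ Aᶜ) (Aᶜ ×ˢ A) := by
    rw [Set.disjoint_left]
    rintro ⟨x, y⟩ ⟨hx, _⟩ ⟨h, _⟩
    exact h hx
  -- split the integral
  have hmeas2 : MeasurableSet ((A ×ˢ Aᶜ) ∪ (Aᶜ ×ˢ A)) :=
    ((hAm.prod hAm.compl).union (hAm.compl.prod hAm))
  have hstep : (∫ z in (Aᶜ ×ˢ Aᶜ)ᶜ, f z) =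
      (∫ z in A ×ˢ A, f z) + ((∫ z in A ×ˢ Aᶜ, f z) + (∫ z in Aᶜ ×ˢ A, f z)) := by
    rw [hQ, setIntegral_union hd1 hmeas2 (h₁.mono_set hsub1)
      ((h₁.mono_set hsub2).union (h₁.mono_set hsub3)),
      setIntegral_union hd2 (hAm.compl.prod hAm) (h₁.mono_set hsub2) (h₁.mono_set hsub3)]
  -- vanishing on A × A
  have hzero : (∫ z in A ×ˢ A, f z) = 0 := by
    apply setIntegral_eq_zero_of_forall_eq_zero
    rintro ⟨x, y⟩ ⟨hx, hy⟩
    simp [hfdef, hφ x (hAC hx), hφ y (hAC hy)]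
  -- symmetry
  have hfsymm : ∀ z : E × E, f (Prod.swap z) = f z := by
    rintro ⟨x, y⟩
    simp only [hfdef, Prod.swap_prod_mk, norm_sub_rev y x]
    ring
  have hswap : (∫ z in A ×ˢ Aᶜ, f z) = (∫ z in Aᶜ ×ˢ A, f z) := by
    have key := (MeasureTheory.Measure.measurePreserving_swap (μ := (volume : Measure E)) (ν := volume)).setIntegral_preimage_emb
      MeasurableEquiv.prodComm.measurableEmbedding f (A ×ˢ Aᶜ)
    rw [Measure.volume_eq_prod]
    rw [Set.preimage_swap_prod] at key
    rw [← key]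
    exact setIntegral_congr_fun (hAm.compl.prod hAm) fun z _ => hfsymm z
  -- replace f by g on Aᶜ ×ˢ A
  have hfg : (∫ z in Aᶜ ×ˢ A, f z) = (∫ z in Aᶜ ×ˢ A, g z) := by
    apply setIntegral_congr_fun (hAm.compl.prod hAm)
    rintro ⟨x, y⟩ ⟨hx, hy⟩
    simp [hfdef, hgdef, hφ y (hAC hy)]
  -- replace Aᶜ by Cᶜ
  have hnull : (volume : Measure (E × E)) ((sphere (0 : E) 1) ×ˢ A) = 0 := by
    rw [Measure.volume_eq_prod, Measure.prod_prod, Measure.addHaar_sphere, zero_mul]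
  have hae : (Aᶜ ×ˢ A : Set (E × E)) =ᵐ[volume] (Cᶜ ×ˢ A : Set (E × E)) := by
    rw [MeasureTheory.ae_eq_set]
    constructor
    · apply measure_mono_null _ hnull
      rintro ⟨x, y⟩ ⟨⟨hx, hy⟩, hn⟩
      refine ⟨?_, hy⟩
      have hxC : x ∈ C := by
        by_contra hxc
        exact hn ⟨hxc, hy⟩
      rw [← closedBall_diff_ball]
      exact ⟨hxC, hx⟩
    · apply measure_mono_null _ (measure_empty (μ := (volume : Measure (E × E))))
      rintro ⟨x, y⟩ ⟨⟨hx, hy⟩, hn⟩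
      exact hn ⟨fun hxa => hx (hAC hxa), hy⟩
  have hset : (∫ z in Aᶜ ×ˢ A, g z) = (∫ z in Cᶜ ×ˢ A, g z) := setIntegral_congr_set hae
  -- Fubini
  have hfub : (∫ z in Cᶜ ×ˢ A, g z) =
      ∫ x in Cᶜ, ∫ y in A, g (x, y) := by
    rw [Measure.volume_eq_prod]
    exact setIntegral_prod g h₂
  have hinner : ∀ x : E, (∫ y in A, g (x, y)) =
      (∫ y in A, (u x - u y) / ‖x - y‖ ^ ((N : ℝ) + 2 * s)) * φ x := by
    intro x
    rw [← integral_mul_const]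
    congr 1
    funext y
    simp only [hgdef]
    ring
  rw [hstep, hzero, hswap, hfg, hset, hfub]
  simp only [hinner]
  ring
end
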